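/- The lower L-row block of A = (X'X)^{-1}X' equals (X̃2'X̃2)^{-1}X̃2', i.e., the rows of (X'X)^{-1}X' corresponding to the X2 coefficients coincide with the OLS projection rows of the residualized regressors X̃2. -/

import Mathlib

open Matrix

theorem stmt_10 {n K L : ℕ}
    (X1 : Matrix (Fin n) (Fin K) ℝ) (X2 : Matrix (Fin n) (Fin L) ℝ)
    (X : Matrix (Fin n) (Fin K ⊕ Fin L) ℝ) (hX : X = Matrix.fromCols X1 X2)
    (H1 : Matrix (Fin n) (Fin n) ℝ) (hH1 : H1 = X1 * (X1ᵀ * X1)⁻¹ * X1ᵀ)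
    (X2t : Matrix (Fin n) (Fin L) ℝ) (hX2t : X2t = (1 - H1) * X2)
    (A : Matrix (Fin K ⊕ Fin L) (Fin n) ℝ) (hA : A = (Xᵀ * X)⁻¹ * Xᵀ)
    (hGX : IsUnit (Xᵀ * X)) (hG1 : IsUnit (X1ᵀ * X1)) (hG2 : IsUnit (X2tᵀ * X2t)) :
    A.submatrix Sum.inr id = (X2tᵀ * X2t)⁻¹ * X2tᵀ := by
  set G := X1ᵀ * X1 with hG
  set S := X2tᵀ * X2t with hS
  set A2 : Matrix (Fin L) (Fin n) ℝ := S⁻¹ * X2tᵀ with hA2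
  set A1 : Matrix (Fin K) (Fin n) ℝ := G⁻¹ * X1ᵀ * (1 - X2 * A2) with hA1
  have hGdet : IsUnit G.det := (Matrix.isUnit_iff_isUnit_det G).mp hG1
  have hSdet : IsUnit S.det := (Matrix.isUnit_iff_isUnit_det S).mp hG2
  have hXdet : IsUnit (Xᵀ * X).det := (Matrix.isUnit_iff_isUnit_det _).mp hGX
  have hGinv : G * G⁻¹ = 1 := Matrix.mul_nonsing_inv G hGdet
  have hSinv : S * S⁻¹ = 1 := Matrix.mul_nonsing_inv S hSdet
  -- H1 is symmetric
  have hGsymm : Gᵀ = G := by rw [hG, Matrix.transpose_mul, Matrix.transpose_transpose]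
  have hH1symm : H1ᵀ = H1 := by
    rw [hH1]
    simp only [Matrix.transpose_mul, Matrix.transpose_transpose,
      Matrix.transpose_nonsing_inv, hGsymm]
    rw [Matrix.mul_assoc]
  -- H1 is idempotent
  have hH1idem : H1 * H1 = H1 := by
    rw [hH1]
    have : X1 * (G⁻¹ * (X1ᵀ * (X1 * (G⁻¹ * X1ᵀ)))) = X1 * (G⁻¹ * X1ᵀ) := by
      rw [← Matrix.mul_assoc X1ᵀ X1, ← hG, ← Matrix.mul_assoc G⁻¹ G,
        Matrix.nonsing_inv_mul G hGdet, Matrix.one_mul]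
    simpa [Matrix.mul_assoc] using this
  have hX1H1 : X1ᵀ * H1 = X1ᵀ := by
    rw [hH1, ← Matrix.mul_assoc, ← Matrix.mul_assoc, ← hG, hGinv, Matrix.one_mul]
  have hX2tT : X2tᵀ = X2ᵀ * (1 - H1) := by
    rw [hX2t, Matrix.transpose_mul, Matrix.transpose_sub, Matrix.transpose_one, hH1symm]
  -- X2tᵀ * H1 = 0
  have hX2tH1 : X2tᵀ * H1 = 0 := by
    rw [hX2tT, Matrix.mul_assoc, Matrix.sub_mul, Matrix.one_mul, hH1idem, sub_self,
      Matrix.mul_zero]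
  -- X2tᵀ * X2 = S
  have hX2tX2 : X2tᵀ * X2 = S := by
    have : X2tᵀ * X2 = X2tᵀ * ((1 - H1) * X2) + X2tᵀ * (H1 * X2) := by
      rw [← Matrix.mul_add, Matrix.sub_mul, Matrix.one_mul, sub_add_cancel]
    rw [this, ← hX2t, ← Matrix.mul_assoc, hX2tH1, Matrix.zero_mul, add_zero, hS]
  have hSA2 : S * A2 = X2tᵀ := by
    rw [hA2, ← Matrix.mul_assoc, hSinv, Matrix.one_mul]
  -- key: (Xᵀ * X) * fromRows A1 A2 = Xᵀ
  have hGA1 : G * A1 = X1ᵀ * (1 - X2 * A2) := by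
    rw [hA1, ← Matrix.mul_assoc, ← Matrix.mul_assoc, hGinv, Matrix.one_mul]
  have hX1A1 : X1 * A1 = H1 * (1 - X2 * A2) := by
    rw [hA1, ← Matrix.mul_assoc, ← Matrix.mul_assoc, ← hH1]
  have hX2tT' : X2tᵀ = X2ᵀ - X2ᵀ * H1 := by
    rw [hX2tT, Matrix.mul_sub, Matrix.mul_one]
  have htop : X1ᵀ * X1 * A1 + X1ᵀ * X2 * A2 = X1ᵀ := by
    rw [← hG, hGA1, Matrix.mul_sub, Matrix.mul_one, Matrix.mul_assoc X1ᵀ X2 A2,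
      sub_add_cancel]
  have e1 : X2ᵀ * X1 * A1 = X2ᵀ * H1 - X2ᵀ * H1 * (X2 * A2) := by
    rw [Matrix.mul_assoc, hX1A1, ← Matrix.mul_assoc, Matrix.mul_sub, Matrix.mul_one]
  have e2 : X2ᵀ * X2 * A2 = X2ᵀ * H1 * (X2 * A2) + (X2ᵀ - X2ᵀ * H1) := by
    have h3 : X2ᵀ * X2 = X2ᵀ * H1 * X2 + X2tᵀ * X2 := by
      rw [hX2tT', Matrix.sub_mul]
      abel
    rw [h3, Matrix.add_mul, Matrix.mul_assoc X2tᵀ X2 A2, ← Matrix.mul_assoc X2tᵀ,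
      hX2tX2, hSA2, hX2tT', Matrix.mul_assoc (X2ᵀ * H1) X2 A2]
  have hbot : X2ᵀ * X1 * A1 + X2ᵀ * X2 * A2 = X2ᵀ := by
    rw [e1, e2]
    abel
  have key : (Xᵀ * X) * Matrix.fromRows A1 A2 = Xᵀ := by
    rw [hX, Matrix.transpose_fromCols, Matrix.fromRows_mul_fromCols,
      Matrix.fromBlocks_mul_fromRows, htop, hbot]
  have hAeq : A = Matrix.fromRows A1 A2 := by
    calc A = (Xᵀ * X)⁻¹ * ((Xᵀ * X) * Matrix.fromRows A1 A2) := by rw [hA, key]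
    _ = Matrix.fromRows A1 A2 := by
        rw [← Matrix.mul_assoc, Matrix.nonsing_inv_mul _ hXdet, Matrix.one_mul]
  rw [hAeq]
  ext i j
  simp [Matrix.submatrix_apply, hA2]
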